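/- Let λ : ℕ → ℝ with 0 ≤ λ n for all n, assume {n : ℕ | λ n ≤ Λ} is finite for every Λ : ℝ, and assume there are constants C > 0 and d > 0 with (Nat.card {n | λ n ≤ Λ} : ℝ) ≤ C * Λ ^ d for all Λ ≥ 1. Let f : ℝ → ℝ be continuous and monotone (nondecreasing) with Tendsto f atTop atTop, and regularly varying of index ρ > 0 at infinity, i.e. for every c > 0, Tendsto (fun t => f (c * t) / f t) atTop (nhds (c ^ ρ)). Then for every ε > 0 there exist C' > 0 and Λ₀ : ℝ such that for all Λ ≥ Λ₀ the set {n | f (λ n) ≤ Λ} is finite and (Nat.card {n | f (λ n) ≤ Λ} : ℝ) ≤ C' * Λ ^ (d / ρ + ε). Powers denote Real.rpow. -/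

import Mathlib

open Filter

lemma rv_lower (f : ℝ → ℝ) (hfmono : Monotone f) (hftop : Tendsto f atTop atTop)
    (ρ : ℝ) (hreg2 : Tendsto (fun t : ℝ => f (2 * t) / f t) atTop (nhds ((2:ℝ) ^ ρ)))
    (α : ℝ) (hα0 : 0 < α) (hα : α < ρ) :
    ∀ᶠ t in atTop, t ^ α < f t := by
  set β := (α + ρ) / 2 with hβdef
  have hβα : α < β := by rw [hβdef]; linarith
  have hβρ : β < ρ := by rw [hβdef]; linarith
  have hβ0 : 0 < β := by linarith
  have h2β : (2:ℝ) ^ β < 2 ^ ρ := by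
    exact Real.rpow_lt_rpow_of_exponent_lt (by norm_num) hβρ
  have hev1 : ∀ᶠ t in atTop, (2:ℝ) ^ β < f (2 * t) / f t :=
    hreg2.eventually (eventually_gt_nhds h2β)
  have hev2 : ∀ᶠ t in atTop, (1:ℝ) ≤ f t := hftop.eventually_ge_atTop 1
  obtain ⟨t₀, ht₀⟩ := eventually_atTop.mp (hev1.and hev2)
  set t₁ := max t₀ 1 with ht₁def
  have ht₁1 : (1:ℝ) ≤ t₁ := le_max_right _ _
  have ht₁pos : (0:ℝ) < t₁ := by linarith
  have hprop : ∀ t, t₁ ≤ t → (2:ℝ) ^ β < f (2 * t) / f t ∧ 1 ≤ f t := by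
    intro t ht
    exact ht₀ t (le_trans (le_max_left _ _) ht)
  have hstep : ∀ t, t₁ ≤ t → (2:ℝ) ^ β * f t < f (2 * t) := by
    intro t ht
    have h := hprop t ht
    have hfpos : 0 < f t := lt_of_lt_of_le one_pos h.2
    exact (lt_div_iff₀ hfpos).mp h.1
  have hind : ∀ k : ℕ, ((2:ℝ) ^ β) ^ k ≤ f (2 ^ k * t₁) := by
    intro k
    induction k with
    | zero => simpa using (hprop t₁ le_rfl).2
    | succ k ih =>
      have h1 : (1:ℝ) ≤ 2 ^ k := one_le_pow₀ (by norm_num)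
      have ht : t₁ ≤ 2 ^ k * t₁ := le_mul_of_one_le_left ht₁pos.le h1
      have hs := hstep (2 ^ k * t₁) ht
      have hnn : (0:ℝ) ≤ (2:ℝ) ^ β := Real.rpow_nonneg (by norm_num) β
      calc ((2:ℝ) ^ β) ^ (k + 1) = (2:ℝ) ^ β * ((2:ℝ) ^ β) ^ k := by ring
        _ ≤ (2:ℝ) ^ β * f (2 ^ k * t₁) := by
            exact mul_le_mul_of_nonneg_left ih hnn
        _ ≤ f (2 ^ (k + 1) * t₁) := by
            have : (2:ℝ) * (2 ^ k * t₁) = 2 ^ (k + 1) * t₁ := by ring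
            rw [← this]; exact hs.le
  have htend : Tendsto (fun t : ℝ => t ^ (β - α)) atTop atTop :=
    tendsto_rpow_atTop (by linarith)
  filter_upwards [eventually_ge_atTop (2 * t₁),
    htend.eventually_gt_atTop ((2 * t₁) ^ β)] with t ht2 ht3
  have htpos : (0:ℝ) < t := by linarith
  set k := ⌊Real.logb 2 (t / t₁)⌋₊ with hkdef
  have hx2 : (2:ℝ) ≤ t / t₁ := by
    rw [le_div_iff₀ ht₁pos]; linarith
  have hxpos : (0:ℝ) < t / t₁ := by linarith
  have hlog0 : 0 ≤ Real.logb 2 (t / t₁) := Real.logb_nonneg (by norm_num) (by linarith)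
  have h2k : (2:ℝ) ^ k ≤ t / t₁ := by
    calc (2:ℝ) ^ k = (2:ℝ) ^ (k : ℝ) := (Real.rpow_natCast 2 k).symm
      _ ≤ (2:ℝ) ^ Real.logb 2 (t / t₁) :=
          Real.rpow_le_rpow_of_exponent_le (by norm_num) (Nat.floor_le hlog0)
      _ = t / t₁ := Real.rpow_logb (by positivity) (by norm_num) hxpos
  have h2k' : t / t₁ < (2:ℝ) ^ (k + 1) := by
    have h := Nat.lt_floor_add_one (Real.logb 2 (t / t₁))
    calc t / t₁ = (2:ℝ) ^ Real.logb 2 (t / t₁) :=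
          (Real.rpow_logb (by positivity) (by norm_num) hxpos).symm
      _ < (2:ℝ) ^ ((k : ℝ) + 1) :=
          Real.rpow_lt_rpow_of_exponent_lt (by norm_num) (by exact_mod_cast h)
      _ = (2:ℝ) ^ (k + 1) := by
          rw [← Real.rpow_natCast 2 (k + 1)]; push_cast; ring_nf
  have ht2k : (2:ℝ) ^ k * t₁ ≤ t := by
    rw [← le_div_iff₀ ht₁pos] at *
    exact h2k
  have hf : ((2:ℝ) ^ β) ^ k ≤ f t := le_trans (hind k) (hfmono ht2k)
  have hbase : t / (2 * t₁) < (2:ℝ) ^ k := by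
    rw [div_lt_iff₀ (by positivity)]
    have : t < 2 ^ (k + 1) * t₁ := by
      rw [← div_lt_iff₀ ht₁pos]; exact h2k'
    calc t < 2 ^ (k + 1) * t₁ := this
      _ = (2:ℝ) ^ k * (2 * t₁) := by ring
  have hpow : ((2:ℝ) ^ β) ^ k = ((2:ℝ) ^ k : ℝ) ^ β := by
    rw [← Real.rpow_natCast ((2:ℝ) ^ β) k, ← Real.rpow_natCast (2:ℝ) k,
      ← Real.rpow_mul (by norm_num), ← Real.rpow_mul (by norm_num), mul_comm]
  have hb : (t / (2 * t₁)) ^ β ≤ ((2:ℝ) ^ β) ^ k := by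
    rw [hpow]
    exact Real.rpow_le_rpow (by positivity) hbase.le hβ0.le
  have hf2 : t ^ β / (2 * t₁) ^ β ≤ f t := by
    rw [← Real.div_rpow htpos.le (by positivity)]
    exact le_trans hb hf
  have hgoal : t ^ α < t ^ β / (2 * t₁) ^ β := by
    rw [lt_div_iff₀ (by positivity)]
    have h5 : t ^ α * (2 * t₁) ^ β < t ^ α * t ^ (β - α) :=
      mul_lt_mul_of_pos_left ht3 (Real.rpow_pos_of_pos htpos α)
    have h6 : t ^ α * t ^ (β - α) = t ^ β := by
      rw [← Real.rpow_add htpos]; ring_nf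
    linarith
  linarith

theorem growth_regularly_varying_transform
    (l : ℕ → ℝ) (hnonneg : ∀ n, 0 ≤ l n)
    (hfin : ∀ Λ : ℝ, {n : ℕ | l n ≤ Λ}.Finite)
    (C d : ℝ) (hC : 0 < C) (hd : 0 < d)
    (hbound : ∀ Λ : ℝ, 1 ≤ Λ → (Nat.card {n : ℕ | l n ≤ Λ} : ℝ) ≤ C * Λ ^ d)
    (f : ℝ → ℝ) (hfcont : Continuous f) (hfmono : Monotone f)
    (hftop : Tendsto f atTop atTop)
    (ρ : ℝ) (hρ : 0 < ρ)
    (hreg : ∀ c : ℝ, 0 < c →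
      Tendsto (fun t : ℝ => f (c * t) / f t) atTop (nhds (c ^ ρ))) :
    ∀ ε : ℝ, 0 < ε → ∃ C' : ℝ, 0 < C' ∧ ∃ Λ₀ : ℝ, ∀ Λ : ℝ, Λ₀ ≤ Λ →
      {n : ℕ | f (l n) ≤ Λ}.Finite ∧
      (Nat.card {n : ℕ | f (l n) ≤ Λ} : ℝ) ≤ C' * Λ ^ (d / ρ + ε) := by
  intro ε hε
  set σ := 1 / ρ + ε / d with hσdef
  have hσ0 : 0 < σ := by positivity
  set α := 1 / σ with hαdef
  have hα0 : 0 < α := by positivity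
  have hαρ : α < ρ := by
    rw [hαdef, div_lt_iff₀ hσ0, hσdef]
    have h1 : 0 < ρ * (ε / d) := by positivity
    rw [mul_add, mul_one_div, div_self hρ.ne']
    linarith
  obtain ⟨t₁, ht₁⟩ := eventually_atTop.mp
    (rv_lower f hfmono hftop ρ (hreg 2 two_pos) α hα0 hαρ)
  set s := max t₁ 1 with hsdef
  have hs1 : (1:ℝ) ≤ s := le_max_right _ _
  refine ⟨C, hC, max 1 (s ^ α), fun Λ hΛ => ?_⟩
  have hΛ1 : 1 ≤ Λ := le_trans (le_max_left _ _) hΛ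
  have hΛpos : 0 < Λ := by linarith
  set T := Λ ^ σ with hTdef
  have hT1 : 1 ≤ T := by
    calc (1:ℝ) = 1 ^ σ := (Real.one_rpow σ).symm
      _ ≤ Λ ^ σ := Real.rpow_le_rpow (by norm_num) hΛ1 hσ0.le
  have hTpos : 0 < T := by linarith
  have hασ : α * σ = 1 := by
    rw [hαdef]; field_simp
  have hTt₁ : t₁ ≤ T := by
    have h1 : s ^ α ≤ Λ := le_trans (le_max_right _ _) hΛ
    have h2 : (s ^ α) ^ σ ≤ Λ ^ σ :=
      Real.rpow_le_rpow (Real.rpow_nonneg (by linarith) α) h1 hσ0.le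
    have h3 : (s ^ α) ^ σ = s := by
      rw [← Real.rpow_mul (by linarith), hασ, Real.rpow_one]
    calc t₁ ≤ s := le_max_left _ _
      _ = (s ^ α) ^ σ := h3.symm
      _ ≤ T := h2
  have hTα : T ^ α = Λ := by
    rw [hTdef, ← Real.rpow_mul hΛpos.le, mul_comm, hασ, Real.rpow_one]
  have hΛltfT : Λ < f T := by
    have := ht₁ T hTt₁
    rwa [hTα] at this
  have hsub : {n : ℕ | f (l n) ≤ Λ} ⊆ {n : ℕ | l n ≤ T} := by
    intro n hn
    by_contra h
    simp only [Set.mem_setOf_eq, not_le] at h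
    have : f T ≤ f (l n) := hfmono h.le
    have : Λ < f (l n) := lt_of_lt_of_le hΛltfT this
    exact absurd hn (by simpa using this.not_ge)
  have hfinite : {n : ℕ | f (l n) ≤ Λ}.Finite := (hfin T).subset hsub
  refine ⟨hfinite, ?_⟩
  have hcard : (Nat.card {n : ℕ | f (l n) ≤ Λ} : ℝ) ≤ (Nat.card {n : ℕ | l n ≤ T} : ℝ) := by
    exact_mod_cast Nat.card_mono (hfin T) hsub
  have hσd : σ * d = d / ρ + ε := by
    rw [hσdef]; field_simp
  calc (Nat.card {n : ℕ | f (l n) ≤ Λ} : ℝ) ≤ (Nat.card {n : ℕ | l n ≤ T} : ℝ) := hcard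
    _ ≤ C * T ^ d := hbound T hT1
    _ = C * Λ ^ (d / ρ + ε) := by
        rw [hTdef, ← Real.rpow_mul hΛpos.le, hσd]
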